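/- For every positive integer t there exists an integer D(t) such that the following holds: if H is a finite bipartite graph with parts W and B that is irreducible, contains no induced subgraph isomorphic to K_{t-1,t}, and contains no induced subgraph isomorphic to the simple tree T_t, then every vertex of H has degree at most D(t). -/

import Mathlib

open SimpleGraph

/-- `S` is an independent set in `G`: pairwise non-adjacent vertices. -/
def IndepOn {V : Type*} (G : SimpleGraph V) (S : Set V) : Prop :=
  S.Pairwise fun u v => ¬ G.Adj u v

/-- `NSet G U` is the set of vertices adjacent to at least one vertex of `U`. -/
def NSet {V : Type*} (G : SimpleGraph V) (U : Set V) : Set V :=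
  {v | ∃ u ∈ U, G.Adj u v}

/-- `(W, B)` is a bipartition of `G` into two independent parts covering all vertices. -/
def IsBipartition {V : Type*} (G : SimpleGraph V) (W B : Set V) : Prop :=
  W ∪ B = Set.univ ∧ Disjoint W B ∧ IndepOn G W ∧ IndepOn G B

/-- A bipartite graph `G` with parts `W` and `B` is irreducible if
(a) `|W| = |B| - 1`, (b) every nonempty `A ⊆ W` satisfies `|A| < |N(A) ∩ B|`,
and (c) `G` is connected. -/
def IrreducibleBip {V : Type*} (G : SimpleGraph V) (W B : Set V) : Prop :=
  IsBipartition G W B ∧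
  W.ncard + 1 = B.ncard ∧
  (∀ A ⊆ W, A.Nonempty → A.ncard < (NSet G A ∩ B).ncard) ∧
  G.Connected

/-- The simple tree `T_k`: the star `K_{1,k}` with each edge subdivided once.
Vertex `0` is the centre, vertices `1,…,k` are the subdivision vertices `a_i`,
and vertices `k+1,…,2k` are the leaves `b_i = i + k`. -/
def simpleTree (k : ℕ) : SimpleGraph (Fin (2 * k + 1)) :=
  SimpleGraph.fromRel fun i j =>
    (i.val = 0 ∧ 1 ≤ j.val ∧ j.val ≤ k) ∨ (1 ≤ i.val ∧ i.val ≤ k ∧ j.val = i.val + k)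

/-- The tree `S_{1,1,3}`: three leaves at distances 1, 1, 3 from the unique degree-3
vertex `0`. Edges: 0-1, 0-2, 0-3, 3-4, 4-5. -/
def S113 : SimpleGraph (Fin 6) :=
  SimpleGraph.fromRel fun i j =>
    (i = 0 ∧ j = 1) ∨ (i = 0 ∧ j = 2) ∨ (i = 0 ∧ j = 3) ∨ (i = 3 ∧ j = 4) ∨ (i = 4 ∧ j = 5)

/-- The claw `K_{1,3}`-freeness. -/
def ClawFree {V : Type*} (G : SimpleGraph V) : Prop :=
  IsEmpty (completeBipartiteGraph (Fin 1) (Fin 3) ↪g G)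

section AuxiliaryLemmas

open Finset


lemma preRamsey (r : ℕ) (hr : 0 < r) :
    ∀ n : ℕ, ∃ N : ℕ, ∀ (c : ℕ → ℕ → Fin r) (S : Finset ℕ), N ≤ S.card →
      ∃ (x : Fin n → ℕ) (f : Fin n → Fin r), StrictMono x ∧ (∀ i, x i ∈ S) ∧
        ∀ i j : Fin n, i < j → c (x i) (x j) = f i := by
  intro n
  induction n with
  | zero =>
      exact ⟨0, fun c S _ => ⟨fun i => Fin.elim0 i, fun i => Fin.elim0 i,
        fun i => Fin.elim0 i, fun i => Fin.elim0 i, fun i => Fin.elim0 i⟩⟩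
  | succ n ih =>
      obtain ⟨N, hN⟩ := ih
      refine ⟨r * N + 1, fun c S hS => ?_⟩
      have hSne : S.Nonempty := by rw [← Finset.card_pos]; omega
      set x0 := S.min' hSne with hx0
      have hx0S : x0 ∈ S := S.min'_mem hSne
      set S' := S.erase x0 with hS'
      have hcard : S'.card = S.card - 1 := Finset.card_erase_of_mem hx0S
      have hpig : ∃ k : Fin r, N ≤ (S'.filter (fun y => c x0 y = k)).card := by
        by_contra h
        push_neg at h
        have hNpos : 0 < N := by
          rcases Nat.eq_zero_or_pos N with h0 | h1
          · exact absurd (h ⟨0, hr⟩) (by omega)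
          · exact h1
        have hle : S'.card ≤ ∑ k : Fin r, (S'.filter (fun y => c x0 y = k)).card := by
          rw [← Finset.card_biUnion]
          · apply Finset.card_le_card
            intro y hy
            simp only [Finset.mem_biUnion]
            exact ⟨c x0 y, Finset.mem_univ _, Finset.mem_filter.2 ⟨hy, rfl⟩⟩
          · intro a _ b _ hab
            exact Finset.disjoint_filter.mpr fun y _ h1 h2 => hab (h1.symm.trans h2)
        have hsum : ∑ k : Fin r, (S'.filter (fun y => c x0 y = k)).card
            ≤ ∑ _k : Fin r, (N - 1) :=
          Finset.sum_le_sum fun k _ => by have := h k; omega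
        simp only [Finset.sum_const, Finset.card_univ, Fintype.card_fin, smul_eq_mul] at hsum
        have heq : r * (N - 1) + r = r * N := by
          have h0 : N - 1 + 1 = N := by omega
          calc r * (N - 1) + r = r * (N - 1 + 1) := by ring
          _ = r * N := by rw [h0]
        omega
      obtain ⟨k, hk⟩ := hpig
      obtain ⟨x, f, hmono, hmem, hcol⟩ := hN c _ hk
      have hmemS' : ∀ i, x i ∈ S' := fun i => Finset.mem_of_mem_filter _ (hmem i)
      have hmemS : ∀ i, x i ∈ S := fun i => Finset.mem_of_mem_erase (hmemS' i)
      have hgt : ∀ i, x0 < x i := by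
        intro i
        have h1 := S.min'_le _ (hmemS i)
        have h2 : x i ≠ x0 := Finset.ne_of_mem_erase (hmemS' i)
        omega
      have hcolk : ∀ i, c x0 (x i) = k := fun i => (Finset.mem_filter.1 (hmem i)).2
      refine ⟨fun i => if h : (i : ℕ) = 0 then x0 else x ⟨(i : ℕ) - 1, by omega⟩,
        fun i => if h : (i : ℕ) = 0 then k else f ⟨(i : ℕ) - 1, by
          have := i.isLt; omega⟩, ?_, ?_, ?_⟩
      · intro i j hij
        have hij' : (i : ℕ) < (j : ℕ) := hij
        dsimp only
        by_cases hi : (i : ℕ) = 0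
        · rw [dif_pos hi, dif_neg (by omega : ¬ (j:ℕ) = 0)]
          exact hgt _
        · rw [dif_neg hi, dif_neg (by omega : ¬ (j:ℕ) = 0)]
          exact hmono (by simp [Fin.lt_def]; omega)
      · intro i
        dsimp only
        by_cases hi : (i : ℕ) = 0
        · rw [dif_pos hi]; exact hx0S
        · rw [dif_neg hi]; exact hmemS _
      · intro i j hij
        have hij' : (i : ℕ) < (j : ℕ) := hij
        dsimp only
        by_cases hi : (i : ℕ) = 0
        · rw [dif_pos hi, dif_pos hi, dif_neg (by omega : ¬ (j:ℕ) = 0)]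
          exact hcolk _
        · rw [dif_neg hi, dif_neg hi, dif_neg (by omega : ¬ (j:ℕ) = 0)]
          exact hcol _ _ (by simp [Fin.lt_def]; omega)

/-- Multicolour Ramsey for (ordered) pairs. -/
lemma ramseyPairs (r k : ℕ) (hr : 0 < r) :
    ∃ N : ℕ, ∀ c : ℕ → ℕ → Fin r, ∃ (y : Fin k → ℕ) (col : Fin r),
      StrictMono y ∧ (∀ i, y i < N) ∧
      ∀ i j : Fin k, i < j → c (y i) (y j) = col := by
  obtain ⟨N, hN⟩ := preRamsey r hr (r * k + 1)
  refine ⟨N, fun c => ?_⟩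
  obtain ⟨x, f, hmono, hmem, hcol⟩ := hN c (Finset.range N) (by simp)
  -- pigeonhole on f : Fin (r*k+1) → Fin r
  have hpig : ∃ col : Fin r, k ≤ (Finset.univ.filter (fun i : Fin (r*k+1) => f i = col)).card := by
    by_contra h
    push_neg at h
    have hle : (Finset.univ : Finset (Fin (r*k+1))).card
        ≤ ∑ col : Fin r, (Finset.univ.filter (fun i => f i = col)).card := by
      rw [← Finset.card_biUnion]
      · apply Finset.card_le_card
        intro i _
        simp only [Finset.mem_biUnion]
        exact ⟨f i, Finset.mem_univ _, Finset.mem_filter.2 ⟨Finset.mem_univ _, rfl⟩⟩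
      · intro a _ b _ hab
        exact Finset.disjoint_filter.mpr fun y _ h1 h2 => hab (h1.symm.trans h2)
    have hsum : ∑ col : Fin r, (Finset.univ.filter (fun i : Fin (r*k+1) => f i = col)).card
        ≤ ∑ _c : Fin r, (k - 1) := Finset.sum_le_sum fun col _ => by have := h col; omega
    simp only [Finset.sum_const, Finset.card_univ, Fintype.card_fin, smul_eq_mul] at hle hsum
    have : r * (k - 1) ≤ r * k := Nat.mul_le_mul_left r (by omega)
    rcases Nat.eq_zero_or_pos k with h0 | hkpos
    · exact absurd (h ⟨0, hr⟩) (by omega)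
    · have : r * (k-1) + r = r * k := by
        have : k - 1 + 1 = k := by omega
        calc r * (k-1) + r = r * (k - 1 + 1) := by ring
        _ = r * k := by rw [this]
      omega
  obtain ⟨col, hcol2⟩ := hpig
  set T := (Finset.univ.filter (fun i : Fin (r*k+1) => f i = col)) with hT
  have : ∃ z : Fin k → Fin (r*k+1), StrictMono z ∧ ∀ i, z i ∈ T := by
    have hk' : k ≤ T.card := hcol2
    obtain ⟨o⟩ : Nonempty (Fin T.card ≃o T) := ⟨Finset.orderIsoOfFin T rfl⟩
    refine ⟨fun i => (o ⟨i, by omega⟩ : Fin (r*k+1)), ?_, ?_⟩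
    · intro i j hij
      have hlt : (⟨(i:ℕ), by omega⟩ : Fin T.card) < ⟨(j:ℕ), by omega⟩ := by
        rw [Fin.lt_def]; exact hij
      have := o.strictMono hlt
      exact_mod_cast this
    · intro i; exact (o ⟨i, by omega⟩).2
  obtain ⟨z, hzmono, hzT⟩ := this
  refine ⟨fun i => x (z i), col, ?_, ?_, ?_⟩
  · exact fun i j hij => hmono (hzmono hij)
  · intro i
    exact Finset.mem_range.mp (hmem (z i))
  · intro i j hij
    have h1 := hcol (z i) (z j) (hzmono hij)
    have h2 : f (z i) = col := (Finset.mem_filter.1 (hzT i)).2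
    rw [h1, h2]

lemma simpleTree_adj (k : ℕ) (x y : Fin (2 * k + 1)) :
    (simpleTree k).Adj x y ↔
      (x.val = 0 ∧ 1 ≤ y.val ∧ y.val ≤ k) ∨ (y.val = 0 ∧ 1 ≤ x.val ∧ x.val ≤ k) ∨
      (1 ≤ x.val ∧ x.val ≤ k ∧ y.val = x.val + k) ∨
      (1 ≤ y.val ∧ y.val ≤ k ∧ x.val = y.val + k) := by
  rw [simpleTree, SimpleGraph.fromRel_adj]
  constructor
  · rintro ⟨hne, h⟩
    have hv : (x : ℕ) ≠ (y : ℕ) := fun he => hne (Fin.ext he)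
    omega
  · intro h
    have hv : (x : ℕ) ≠ (y : ℕ) := by omega
    exact ⟨fun he => hv (congrArg Fin.val he), by omega⟩

lemma embCBG {V : Type} (G : SimpleGraph V) (p q : ℕ) (a : Fin p → V) (b : Fin q → V)
    (hainj : Function.Injective a) (hbinj : Function.Injective b)
    (hab : ∀ i j, a i ≠ b j)
    (hadj : ∀ i j, G.Adj (a i) (b j))
    (haa : ∀ i j, ¬ G.Adj (a i) (a j)) (hbb : ∀ i j, ¬ G.Adj (b i) (b j)) :
    Nonempty (completeBipartiteGraph (Fin p) (Fin q) ↪g G) := by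
  refine ⟨⟨⟨Sum.elim a b, ?_⟩, ?_⟩⟩
  · rintro (i | i) (j | j) h <;> simp only [Sum.elim_inl, Sum.elim_inr] at h
    · rw [hainj h]
    · exact absurd h (hab i j)
    · exact absurd h.symm (hab j i)
    · rw [hbinj h]
  · rintro (i | i) (j | j) <;>
      simp only [Function.Embedding.coeFn_mk, Sum.elim_inl, Sum.elim_inr,
        completeBipartiteGraph_adj, Sum.isLeft_inl, Sum.isRight_inl, Sum.isLeft_inr,
        Sum.isRight_inr]
    · exact iff_of_false (haa i j) (by simp)
    · exact iff_of_true (hadj i j) (by simp)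
    · exact iff_of_true (hadj j i).symm (by simp)
    · exact iff_of_false (hbb i j) (by simp)

lemma embTree {V : Type} (G : SimpleGraph V) (t : ℕ) (v : V) (a u : Fin t → V)
    (hainj : Function.Injective a) (huinj : Function.Injective u)
    (huv : ∀ i, u i ≠ v) (hau : ∀ i j, a i ≠ u j)
    (hva : ∀ i, G.Adj v (a i)) (haui : ∀ i, G.Adj (a i) (u i))
    (hvu : ∀ i, ¬ G.Adj v (u i)) (haa : ∀ i j, ¬ G.Adj (a i) (a j))
    (huu : ∀ i j, ¬ G.Adj (u i) (u j))
    (hcross : ∀ i j, i ≠ j → ¬ G.Adj (a i) (u j)) :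
    Nonempty (simpleTree t ↪g G) := by
  have hav : ∀ i, a i ≠ v := fun i h => G.irrefl (h ▸ (hva i).symm)
  set f : Fin (2 * t + 1) → V := fun x =>
    if h0 : (x : ℕ) = 0 then v
    else if h1 : (x : ℕ) ≤ t then a ⟨(x : ℕ) - 1, by omega⟩
    else u ⟨(x : ℕ) - 1 - t, by have := x.isLt; omega⟩ with hf
  have hfval : ∀ x : Fin (2 * t + 1),
      ((x : ℕ) = 0 ∧ f x = v) ∨
      (∃ hx : 1 ≤ (x : ℕ) ∧ (x : ℕ) ≤ t, f x = a ⟨(x : ℕ) - 1, by omega⟩) ∨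
      (∃ hx : t + 1 ≤ (x : ℕ) ∧ (x : ℕ) ≤ 2 * t, f x = u ⟨(x : ℕ) - 1 - t, by omega⟩) := by
    intro x
    by_cases h0 : (x : ℕ) = 0
    · exact Or.inl ⟨h0, by rw [hf]; dsimp only; rw [dif_pos h0]⟩
    by_cases h1 : (x : ℕ) ≤ t
    · exact Or.inr (Or.inl ⟨⟨by omega, h1⟩, by rw [hf]; dsimp only; rw [dif_neg h0, dif_pos h1]⟩)
    · exact Or.inr (Or.inr ⟨⟨by omega, by have := x.isLt; omega⟩, by rw [hf]; dsimp only; rw [dif_neg h0, dif_neg h1]⟩)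
  refine ⟨⟨⟨f, ?_⟩, ?_⟩⟩
  · -- injectivity
    intro x y hxy
    rcases hfval x with ⟨hx, ex⟩ | ⟨hx, ex⟩ | ⟨hx, ex⟩ <;>
      rcases hfval y with ⟨hy, ey⟩ | ⟨hy, ey⟩ | ⟨hy, ey⟩ <;>
      rw [ex, ey] at hxy
    · exact Fin.ext (by omega)
    · exact absurd hxy.symm (hav _)
    · exact absurd hxy.symm (huv _)
    · exact absurd hxy (hav _)
    · have h2 : (x : ℕ) - 1 = (y : ℕ) - 1 := by
        have := hainj hxy; simpa [Fin.ext_iff] using this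
      exact Fin.ext (by omega)
    · exact absurd hxy (hau _ _)
    · exact absurd hxy (huv _)
    · exact absurd hxy.symm (hau _ _)
    · have h2 : (x : ℕ) - 1 - t = (y : ℕ) - 1 - t := by
        have := huinj hxy; simpa [Fin.ext_iff] using this
      exact Fin.ext (by omega)
  · -- adjacency iff
    intro x y
    show G.Adj (f x) (f y) ↔ (simpleTree t).Adj x y
    rw [simpleTree_adj]
    rcases hfval x with ⟨hx, ex⟩ | ⟨hx, ex⟩ | ⟨hx, ex⟩ <;>
      rcases hfval y with ⟨hy, ey⟩ | ⟨hy, ey⟩ | ⟨hy, ey⟩ <;> rw [ex, ey]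
    · simp only [G.irrefl, false_iff]; omega
    · simp only [hva, true_iff]; omega
    · simp only [hvu, false_iff]; omega
    · rw [G.adj_comm]; simp only [hva, true_iff]; omega
    · simp only [haa, false_iff]; omega
    · -- a vs u
      by_cases hij : (⟨(x:ℕ)-1, by omega⟩ : Fin t) = ⟨(y:ℕ)-1-t, by omega⟩
      · rw [hij]
        simp only [haui, true_iff]
        simp only [Fin.mk.injEq] at hij
        omega
      · simp only [hcross _ _ hij, false_iff]
        simp only [ne_eq, Fin.mk.injEq] at hij
        omega
    · rw [G.adj_comm]; simp only [hvu, false_iff]; omega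
    · -- u vs a
      rw [G.adj_comm]
      by_cases hij : (⟨(y:ℕ)-1, by omega⟩ : Fin t) = ⟨(x:ℕ)-1-t, by omega⟩
      · rw [hij]
        simp only [haui, true_iff]
        simp only [Fin.mk.injEq] at hij
        omega
      · simp only [hcross _ _ hij, false_iff]
        simp only [ne_eq, Fin.mk.injEq] at hij
        omega
    · simp only [huu, false_iff]; omega

lemma main_aux {V : Type} [Fintype V] (t : ℕ) (ht : 1 ≤ t) (N : ℕ)
    (hN : ∀ c : ℕ → ℕ → Fin 4, ∃ (y : Fin (2 * t) → ℕ) (col : Fin 4),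
      StrictMono y ∧ (∀ i, y i < N) ∧ ∀ i j : Fin (2 * t), i < j → c (y i) (y j) = col)
    (G : SimpleGraph V) (P : Set V) (v : V) (hv : v ∈ P)
    (hindP : ∀ x ∈ P, ∀ y ∈ P, ¬ G.Adj x y)
    (hnadj : ∀ x y, G.Adj v x → G.Adj v y → ¬ G.Adj x y)
    (hsep : ∀ x y, G.Adj v x → y ∈ P → x ≠ y)
    (hexp2 : ∀ S : Finset V, ↑S ⊆ G.neighborSet v →
      S.card ≤ (NSet G ↑S ∩ P).ncard + 1)
    (hK : IsEmpty (completeBipartiteGraph (Fin (t - 1)) (Fin t) ↪g G))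
    (hT : IsEmpty (simpleTree t ↪g G)) :
    (G.neighborSet v).ncard ≤ N + 3 := by
  classical
  by_contra hd
  push_neg at hd
  set An : Finset V := (G.neighborSet v).toFinite.toFinset with hAn
  have hmemAn : ∀ x, x ∈ An ↔ G.Adj v x := by
    intro x; rw [hAn, Set.Finite.mem_toFinset, mem_neighborSet]
  have hdAn : (G.neighborSet v).ncard = An.card := Set.ncard_eq_toFinset_card _ _
  -- Hall's condition with two dummies
  set tfun : {x // x ∈ An} → Finset (V ⊕ Fin 2) := fun a =>
    ((G.neighborSet a.1 ∩ P).toFinite.toFinset).image Sum.inl ∪ {Sum.inr 0, Sum.inr 1}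
    with htfun
  have hall : ∀ s : Finset {x // x ∈ An}, s.card ≤ (s.biUnion tfun).card := by
    intro s
    rcases s.eq_empty_or_nonempty with rfl | hsne
    · simp
    set s' : Finset V := s.image (fun a => a.1) with hs'
    have hs'card : s'.card = s.card := Finset.card_image_of_injective _ Subtype.coe_injective
    have hs'sub : ↑s' ⊆ G.neighborSet v := by
      intro x hx
      simp only [hs', Finset.coe_image, Set.mem_image, Finset.mem_coe] at hx
      obtain ⟨a, _, rfl⟩ := hx
      exact (hmemAn a.1).1 a.2
    have hkey : ((NSet G ↑s' ∩ P).toFinite.toFinset).image Sum.inl ∪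
        ({Sum.inr 0, Sum.inr 1} : Finset (V ⊕ Fin 2)) ⊆ s.biUnion tfun := by
      intro x hx
      rw [Finset.mem_union] at hx
      rcases hx with hx | hx
      · rw [Finset.mem_image] at hx
        obtain ⟨z, hz, rfl⟩ := hx
        rw [Set.Finite.mem_toFinset] at hz
        obtain ⟨⟨w, hw, hwz⟩, hzP⟩ := hz
        rw [Finset.mem_coe, hs', Finset.mem_image] at hw
        obtain ⟨a, has, rfl⟩ := hw
        rw [Finset.mem_biUnion]
        refine ⟨a, has, ?_⟩
        rw [htfun]
        simp only [Finset.mem_union, Finset.mem_image, Set.Finite.mem_toFinset]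
        exact Or.inl ⟨z, ⟨hwz, hzP⟩, rfl⟩
      · obtain ⟨a, has⟩ := hsne
        rw [Finset.mem_biUnion]
        refine ⟨a, has, ?_⟩
        rw [htfun]
        simp only [Finset.mem_union]
        exact Or.inr hx
    have hcle := Finset.card_le_card hkey
    have hdis : Disjoint (((NSet G ↑s' ∩ P).toFinite.toFinset).image Sum.inl)
        ({Sum.inr 0, Sum.inr 1} : Finset (V ⊕ Fin 2)) := by
      simp only [Finset.disjoint_left, Finset.mem_image, Finset.mem_insert,
        Finset.mem_singleton]
      rintro x ⟨z, _, rfl⟩ (h | h) <;> simp at h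
    rw [Finset.card_union_of_disjoint hdis,
      Finset.card_image_of_injective _ Sum.inl_injective] at hcle
    have h2 : ({Sum.inr 0, Sum.inr 1} : Finset (V ⊕ Fin 2)).card = 2 := by
      rw [Finset.card_insert_of_notMem (by simp), Finset.card_singleton]
    have hexp := hexp2 s' hs'sub
    rw [Set.ncard_eq_toFinset_card _ ((NSet G ↑s' ∩ P).toFinite)] at hexp
    omega
  obtain ⟨f, hfinj, hfmem⟩ := (Finset.all_card_le_biUnion_card_iff_exists_injective tfun).1 hall
  -- good vertices
  set good : Finset {x // x ∈ An} :=
    Finset.univ.filter (fun a => ∃ y : V, f a = Sum.inl y ∧ y ≠ v) with hgood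
  have hbad : (Finset.univ.filter
      (fun a : {x // x ∈ An} => ¬ ∃ y : V, f a = Sum.inl y ∧ y ≠ v)).card ≤ 3 := by
    have hmaps : ∀ a ∈ Finset.univ.filter
        (fun a : {x // x ∈ An} => ¬ ∃ y : V, f a = Sum.inl y ∧ y ≠ v),
        f a ∈ ({Sum.inl v, Sum.inr 0, Sum.inr 1} : Finset (V ⊕ Fin 2)) := by
      intro a ha
      simp only [Finset.mem_filter, Finset.mem_univ, true_and, not_exists, not_and,
        not_ne_iff] at ha
      have := hfmem a
      rw [htfun] at this
      simp only [Finset.mem_union, Finset.mem_image, Set.Finite.mem_toFinset] at this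
      rcases this with ⟨z, _, hz⟩ | h
      · have := ha z hz.symm
        simp [Finset.mem_insert, ← hz, this]
      · simpa [Finset.mem_insert] using Or.inr (by simpa using h)
    have hinj : Set.InjOn f (Finset.univ.filter
        (fun a : {x // x ∈ An} => ¬ ∃ y : V, f a = Sum.inl y ∧ y ≠ v) : Finset _) :=
      fun x _ y _ h => hfinj h
    have := Finset.card_le_card_of_injOn f hmaps hinj
    have h3 : ({Sum.inl v, Sum.inr 0, Sum.inr 1} : Finset (V ⊕ Fin 2)).card ≤ 3 :=
      le_trans (Finset.card_insert_le _ _) (Nat.succ_le_succ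
        (le_trans (Finset.card_insert_le _ _) (by simp)))
    omega
  have hgc : N + 1 ≤ good.card := by
    have hsplit := Finset.card_filter_add_card_filter_not
      (s := (Finset.univ : Finset {x // x ∈ An}))
      (p := fun a => ∃ y : V, f a = Sum.inl y ∧ y ≠ v)
    have hcAn : (Finset.univ : Finset {x // x ∈ An}).card = An.card := by
      rw [Finset.card_univ, Fintype.card_coe]
    have hge : good.card = (Finset.univ.filter
        (fun a : {x // x ∈ An} => ∃ y : V, f a = Sum.inl y ∧ y ≠ v)).card := by rw [hgood]
    omega
  -- enumeration of good
  set m := good.card with hm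
  have hcard_good : Fintype.card {x // x ∈ good} = m := Fintype.card_coe good
  set e : Fin m → {x // x ∈ good} := fun i =>
    (Fintype.equivFin {x // x ∈ good}).symm ⟨i.val, by rw [hcard_good]; exact i.isLt⟩ with he
  have heinj : Function.Injective e := by
    intro i j hij
    rw [he] at hij
    have h2 := congrArg (Fintype.equivFin {x // x ∈ good}) hij
    simp only [Equiv.apply_symm_apply] at h2
    have h3 := congrArg Fin.val h2
    exact Fin.ext (by simpa using h3)
  set a : Fin m → V := fun i => ((e i).1 : {x // x ∈ An}).1 with ha
  have hspec : ∀ i : Fin m, ∃ y, f (e i).1 = Sum.inl y ∧ y ≠ v := by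
    intro i
    exact (Finset.mem_filter.1 ((e i).2)).2
  set u : Fin m → V := fun i => Classical.choose (hspec i) with hu
  have hufe : ∀ i, f (e i).1 = Sum.inl (u i) := fun i => (Classical.choose_spec (hspec i)).1
  have huv : ∀ i, u i ≠ v := fun i => (Classical.choose_spec (hspec i)).2
  have humem : ∀ i, G.Adj (a i) (u i) ∧ u i ∈ P := by
    intro i
    have hmem := hfmem (e i).1
    rw [htfun] at hmem
    simp only [Finset.mem_union, Finset.mem_image, Set.Finite.mem_toFinset,
      Finset.mem_insert, Finset.mem_singleton, Set.mem_inter_iff, mem_neighborSet] at hmem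
    rcases hmem with ⟨z, hz, hze⟩ | h | h
    · rw [hufe] at hze
      cases Sum.inl_injective hze
      exact ⟨hz.1, hz.2⟩
    · rw [hufe] at h; cases h
    · rw [hufe] at h; cases h
  have hvadj : ∀ i, G.Adj v (a i) := fun i => (hmemAn _).1 (e i).1.2
  have hainj : Function.Injective a := by
    intro i j hij
    exact heinj (Subtype.ext (Subtype.ext hij))
  have huinj : Function.Injective u := by
    intro i j hij
    exact heinj (Subtype.ext (hfinj (by rw [hufe, hufe, hij])))
  -- coloring
  set c : ℕ → ℕ → Fin 4 := fun p q =>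
    if h : p < m ∧ q < m then
      if G.Adj (a ⟨p, h.1⟩) (u ⟨q, h.2⟩) then
        if G.Adj (a ⟨q, h.2⟩) (u ⟨p, h.1⟩) then 0 else 1
      else
        if G.Adj (a ⟨q, h.2⟩) (u ⟨p, h.1⟩) then 2 else 3
    else 0 with hc
  obtain ⟨y, col, hymono, hyN, hycol⟩ := hN c
  have hym : ∀ i : Fin (2 * t), y i < m := fun i => lt_of_lt_of_le (hyN i) (by omega)
  have key : ∀ i j : Fin (2 * t), i < j →
      (G.Adj (a ⟨y i, hym i⟩) (u ⟨y j, hym j⟩) ↔ (col.val = 0 ∨ col.val = 1)) ∧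
      (G.Adj (a ⟨y j, hym j⟩) (u ⟨y i, hym i⟩) ↔ (col.val = 0 ∨ col.val = 2)) := by
    intro i j hij
    have hcc := hycol i j hij
    rw [hc] at hcc
    dsimp only at hcc
    rw [dif_pos (⟨hym i, hym j⟩ : y i < m ∧ y j < m)] at hcc
    by_cases h1 : G.Adj (a ⟨y i, hym i⟩) (u ⟨y j, hym j⟩) <;>
      by_cases h2 : G.Adj (a ⟨y j, hym j⟩) (u ⟨y i, hym i⟩)
    · rw [if_pos h1, if_pos h2] at hcc
      have hcv : col.val = 0 := by cases hcc; rfl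
      exact ⟨iff_of_true h1 (Or.inl hcv), iff_of_true h2 (Or.inl hcv)⟩
    · rw [if_pos h1, if_neg h2] at hcc
      have hcv : col.val = 1 := by cases hcc; rfl
      exact ⟨iff_of_true h1 (Or.inr hcv), iff_of_false h2 (by omega)⟩
    · rw [if_neg h1, if_pos h2] at hcc
      have hcv : col.val = 2 := by cases hcc; rfl
      exact ⟨iff_of_false h1 (by omega), iff_of_true h2 (Or.inr hcv)⟩
    · rw [if_neg h1, if_neg h2] at hcc
      have hcv : col.val = 3 := by cases hcc; rfl
      exact ⟨iff_of_false h1 (by omega), iff_of_false h2 (by omega)⟩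
  -- basic facts
  have hQ2 : ∀ i j : Fin m, ¬ G.Adj (a i) (a j) := fun i j => hnadj _ _ (hvadj i) (hvadj j)
  have hP2 : ∀ i j : Fin m, ¬ G.Adj (u i) (u j) := fun i j => hindP _ (humem i).2 _ (humem j).2
  have hvu : ∀ i : Fin m, ¬ G.Adj v (u i) := fun i => hindP _ hv _ (humem i).2
  have hau : ∀ i j : Fin m, a i ≠ u j := fun i j => hsep _ _ (hvadj i) (humem j).2
  have hav : ∀ i : Fin m, a i ≠ v := fun i => hsep _ _ (hvadj i) hv
  have hmadj : ∀ i : Fin m, G.Adj (a i) (u i) := fun i => (humem i).1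
  -- adjacency from colors
  have hadjYY : ∀ p q : Fin (2 * t),
      ((col.val = 0 ∧ p = q) ∨ (p < q ∧ (col.val = 0 ∨ col.val = 1)) ∨
        (q < p ∧ (col.val = 0 ∨ col.val = 2))) →
      G.Adj (a ⟨y p, hym p⟩) (u ⟨y q, hym q⟩) := by
    intro p q h
    rcases h with ⟨_, rfl⟩ | ⟨hpq, hcv⟩ | ⟨hqp, hcv⟩
    · exact hmadj _
    · exact ((key p q hpq).1).2 hcv
    · exact ((key q p hqp).2).2 hcv
  -- K_{t-1,t} builder
  have buildK : ∀ ai ui : Fin (t - 1) → Fin (2 * t),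
      Function.Injective ai → Function.Injective ui →
      (∀ i j, G.Adj (a ⟨y (ai i), hym _⟩) (u ⟨y (ui j), hym _⟩)) → False := by
    intro ai ui hai hui hadjall
    set aa : Fin (t - 1) → V := fun i => a ⟨y (ai i), hym _⟩ with haa
    set bb : Fin t → V := fun j =>
      if h : (j : ℕ) = 0 then v
      else u ⟨y (ui ⟨(j : ℕ) - 1, by have := j.isLt; omega⟩), hym _⟩ with hbb
    have hbbP : ∀ j, bb j ∈ P := by
      intro j
      rw [hbb]
      dsimp only
      split
      · exact hv
      · exact (humem _).2
    have h1 : Function.Injective aa := by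
      intro i j hij
      rw [haa] at hij
      dsimp only at hij
      have h2 := hainj hij
      have h3 : y (ai i) = y (ai j) := by
        have := congrArg Fin.val h2; simpa using this
      exact hai (hymono.injective h3)
    have h2 : Function.Injective bb := by
      intro i j hij
      rw [hbb] at hij
      dsimp only at hij
      by_cases hi0 : (i : ℕ) = 0 <;> by_cases hj0 : (j : ℕ) = 0
      · exact Fin.ext (by omega)
      · rw [dif_pos hi0, dif_neg hj0] at hij
        exact absurd hij.symm (huv _)
      · rw [dif_neg hi0, dif_pos hj0] at hij
        exact absurd hij (huv _)
      · rw [dif_neg hi0, dif_neg hj0] at hij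
        have h3 := huinj hij
        have h4 : y (ui ⟨(i : ℕ) - 1, by have := i.isLt; omega⟩)
            = y (ui ⟨(j : ℕ) - 1, by have := j.isLt; omega⟩) := by
          have := congrArg Fin.val h3; simpa using this
        have h5 := hui (hymono.injective h4)
        have h6 : (i : ℕ) - 1 = (j : ℕ) - 1 := by
          have := congrArg Fin.val h5; simpa using this
        exact Fin.ext (by omega)
    have h3 : ∀ i j, aa i ≠ bb j := by
      intro i j
      rw [haa, hbb]
      dsimp only
      split
      · exact hav _
      · exact hau _ _
    have h4 : ∀ i j, G.Adj (aa i) (bb j) := by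
      intro i j
      rw [haa, hbb]
      dsimp only
      split
      · exact (hvadj _).symm
      · exact hadjall i _
    have h5 : ∀ i j, ¬ G.Adj (aa i) (aa j) := fun i j => hQ2 _ _
    have h6 : ∀ i j, ¬ G.Adj (bb i) (bb j) := fun i j => hindP _ (hbbP i) _ (hbbP j)
    obtain ⟨emb⟩ := embCBG G (t - 1) t aa bb h1 h2 h3 h4 h5 h6
    exact hK.false emb
  -- case analysis on the color
  have hcol4 : col.val = 0 ∨ col.val = 1 ∨ col.val = 2 ∨ col.val = 3 := by
    have := col.isLt; omega
  rcases hcol4 with h0 | h1 | h2 | h3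
  · -- col = 0 : complete pattern on low indices
    refine buildK (fun i => ⟨i.val, by have := i.isLt; omega⟩)
      (fun i => ⟨i.val, by have := i.isLt; omega⟩) ?_ ?_ ?_
    · intro i j hij
      exact Fin.ext (by have := congrArg Fin.val hij; simpa using this)
    · intro i j hij
      exact Fin.ext (by have := congrArg Fin.val hij; simpa using this)
    · intro i j
      rcases lt_trichotomy (i : ℕ) (j : ℕ) with hlt | heq | hgt
      · exact hadjYY _ _ (Or.inr (Or.inl ⟨by rw [Fin.lt_def]; exact hlt, Or.inl h0⟩))
      · exact hadjYY _ _ (Or.inl ⟨h0, Fin.ext (by simpa using heq)⟩)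
      · exact hadjYY _ _ (Or.inr (Or.inr ⟨by rw [Fin.lt_def]; exact hgt, Or.inl h0⟩))
  · -- col = 1 : a's low, u's high
    refine buildK (fun i => ⟨i.val, by have := i.isLt; omega⟩)
      (fun i => ⟨i.val + t, by have := i.isLt; omega⟩) ?_ ?_ ?_
    · intro i j hij
      exact Fin.ext (by have := congrArg Fin.val hij; simpa using this)
    · intro i j hij
      exact Fin.ext (by have := congrArg Fin.val hij; simpa using this)
    · intro i j
      refine hadjYY _ _ (Or.inr (Or.inl ⟨?_, Or.inr h1⟩))
      rw [Fin.lt_def]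
      have := i.isLt; have := j.isLt
      simp only
      omega
  · -- col = 2 : a's high, u's low
    refine buildK (fun i => ⟨i.val + t, by have := i.isLt; omega⟩)
      (fun i => ⟨i.val, by have := i.isLt; omega⟩) ?_ ?_ ?_
    · intro i j hij
      exact Fin.ext (by have := congrArg Fin.val hij; simpa using this)
    · intro i j hij
      exact Fin.ext (by have := congrArg Fin.val hij; simpa using this)
    · intro i j
      refine hadjYY _ _ (Or.inr (Or.inr ⟨?_, Or.inr h2⟩))
      rw [Fin.lt_def]
      have := i.isLt; have := j.isLt
      simp only
      omega
  · -- col = 3 : induced matching, simple tree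
    set AA : Fin t → V := fun i => a ⟨y ⟨i.val, by have := i.isLt; omega⟩, hym _⟩ with hAA
    set UU : Fin t → V := fun i => u ⟨y ⟨i.val, by have := i.isLt; omega⟩, hym _⟩ with hUU
    have hidx : ∀ i j : Fin t, (i : ℕ) < (j : ℕ) →
        ((⟨i.val, by have := i.isLt; omega⟩ : Fin (2*t)) < ⟨j.val, by have := j.isLt; omega⟩) := by
      intro i j hij
      rw [Fin.lt_def]
      exact hij
    have hAAinj : Function.Injective AA := by
      intro i j hij
      rw [hAA] at hij
      dsimp only at hij
      have h4 := hainj hij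
      have h5 : y ⟨i.val, by have := i.isLt; omega⟩ = y ⟨j.val, by have := j.isLt; omega⟩ := by
        have := congrArg Fin.val h4; simpa using this
      have h6 := hymono.injective h5
      exact Fin.ext (by have := congrArg Fin.val h6; simpa using this)
    have hUUinj : Function.Injective UU := by
      intro i j hij
      rw [hUU] at hij
      dsimp only at hij
      have h4 := huinj hij
      have h5 : y ⟨i.val, by have := i.isLt; omega⟩ = y ⟨j.val, by have := j.isLt; omega⟩ := by
        have := congrArg Fin.val h4; simpa using this
      have h6 := hymono.injective h5
      exact Fin.ext (by have := congrArg Fin.val h6; simpa using this)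
    have hcross : ∀ i j : Fin t, i ≠ j → ¬ G.Adj (AA i) (UU j) := by
      intro i j hij hadj
      rw [hAA, hUU] at hadj
      dsimp only at hadj
      have hne : (i : ℕ) ≠ (j : ℕ) := fun h => hij (Fin.ext h)
      rcases Nat.lt_or_ge (i : ℕ) (j : ℕ) with hlt | hge
      · have := ((key _ _ (hidx i j hlt)).1).1 hadj
        omega
      · have hgt : (j : ℕ) < (i : ℕ) := by omega
        have := ((key _ _ (hidx j i hgt)).2).1 hadj
        omega
    obtain ⟨emb⟩ := embTree G t v AA UU hAAinj hUUinj (fun i => huv _)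
      (fun i j => hau _ _) (fun i => hvadj _) (fun i => hmadj _) (fun i => hvu _)
      (fun i j => hQ2 _ _) (fun i j => hP2 _ _) hcross
    exact hT.false emb

end AuxiliaryLemmas

/-- For every `t ≥ 1` there is a bound `D` such that every irreducible bipartite graph
containing no induced `K_{t-1,t}` and no induced simple tree `T_t` has maximum
degree at most `D`. -/
theorem statement6 (t : ℕ) (ht : 1 ≤ t) :
    ∃ D : ℕ, ∀ (V : Type) [Fintype V] (G : SimpleGraph V) (W B : Set V),
      IrreducibleBip G W B →
      IsEmpty (completeBipartiteGraph (Fin (t - 1)) (Fin t) ↪g G) →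
      IsEmpty (simpleTree t ↪g G) →
      ∀ v : V, (G.neighborSet v).ncard ≤ D := by
  obtain ⟨N, hN⟩ := ramseyPairs 4 (2 * t) (by norm_num)
  refine ⟨N + 3, ?_⟩
  intro V _ G W B hirr hK hT v
  classical
  obtain ⟨⟨hcover, hdisj, hindW, hindB⟩, hcard, hexp, hconn⟩ := hirr
  have hmemWB : ∀ x : V, x ∈ W ∨ x ∈ B := by
    intro x
    have hx : x ∈ W ∪ B := by rw [hcover]; trivial
    exact hx
  have hdisj' : ∀ x : V, x ∈ W → x ∈ B → False :=
    fun x hW hB => (Set.disjoint_left.1 hdisj hW) hB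
  have hindW' : ∀ x ∈ W, ∀ y ∈ W, ¬ G.Adj x y := by
    intro x hx y hy hxy
    exact hindW hx hy (G.ne_of_adj hxy) hxy
  have hindB' : ∀ x ∈ B, ∀ y ∈ B, ¬ G.Adj x y := by
    intro x hx y hy hxy
    exact hindB hx hy (G.ne_of_adj hxy) hxy
  have hadjWB : ∀ x y : V, G.Adj x y → x ∈ W → y ∈ B := fun x y hxy hx =>
    (hmemWB y).resolve_left (fun hy => hindW' x hx y hy hxy)
  have hadjBW : ∀ x y : V, G.Adj x y → x ∈ B → y ∈ W := fun x y hxy hx =>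
    (hmemWB y).elim id (fun hy => absurd hxy (hindB' x hx y hy))
  have hSfin : ∀ S : Set V, S.Finite := fun S => S.toFinite
  rcases hmemWB v with hvW | hvB
  · -- v ∈ W
    apply main_aux t ht N hN G W v hvW hindW'
    · intro x y hvx hvy
      exact hindB' x (hadjWB v x hvx hvW) y (hadjWB v y hvy hvW)
    · intro x y hvx hyW heq
      exact hdisj' x (heq ▸ hyW) (hadjWB v x hvx hvW)
    · -- expansion from the B side
      intro S hSsub
      have hSB : (↑S : Set V) ⊆ B := fun x hx => hadjWB v x (hSsub hx) hvW
      have hScard : (↑S : Set V).ncard = S.card := Set.ncard_coe_finset S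
      by_cases hWF : W ⊆ NSet G ↑S
      · have hFeq : NSet G ↑S ∩ W = W := Set.inter_eq_self_of_subset_right hWF
        have h1 : (↑S : Set V).ncard ≤ B.ncard := Set.ncard_le_ncard hSB B.toFinite
        rw [hFeq]
        omega
      · obtain ⟨w, hwW, hwN⟩ := Set.not_subset.1 hWF
        have hAne : (W \ NSet G ↑S).Nonempty := ⟨w, hwW, hwN⟩
        have hlt := hexp (W \ NSet G ↑S) Set.diff_subset hAne
        have hsub2 : NSet G (W \ NSet G ↑S) ∩ B ⊆ B \ ↑S := by
          rintro b ⟨⟨w', hw', hadj⟩, hbB⟩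
          refine ⟨hbB, fun hbS => ?_⟩
          exact hw'.2 ⟨b, hbS, hadj.symm⟩
        have h2 : (NSet G (W \ NSet G ↑S) ∩ B).ncard ≤ (B \ ↑S).ncard :=
          Set.ncard_le_ncard hsub2 (hSfin _)
        have h3 : (B \ ↑S).ncard = B.ncard - (↑S : Set V).ncard :=
          Set.ncard_diff hSB (hSfin _)
        have h4 : (W \ NSet G ↑S).ncard = W.ncard - (NSet G ↑S ∩ W).ncard := by
          rw [← Set.diff_inter_self_eq_diff]
          exact Set.ncard_diff Set.inter_subset_right (hSfin _)
        have h5 : (NSet G ↑S ∩ W).ncard ≤ W.ncard :=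
          Set.ncard_le_ncard Set.inter_subset_right (hSfin _)
        have h6 : (↑S : Set V).ncard ≤ B.ncard := Set.ncard_le_ncard hSB B.toFinite
        omega
    · exact hK
    · exact hT
  · -- v ∈ B
    apply main_aux t ht N hN G B v hvB hindB'
    · intro x y hvx hvy
      exact hindW' x (hadjBW v x hvx hvB) y (hadjBW v y hvy hvB)
    · intro x y hvx hyB heq
      exact hdisj' x (hadjBW v x hvx hvB) (heq ▸ hyB)
    · intro S hSsub
      rcases S.eq_empty_or_nonempty with rfl | hSne
      · simp
      have hSW : (↑S : Set V) ⊆ W := fun x hx => hadjBW v x (hSsub hx) hvB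
      have hlt := hexp ↑S hSW (by exact_mod_cast hSne)
      have hScard : (↑S : Set V).ncard = S.card := Set.ncard_coe_finset S
      omega
    · exact hK
    · exact hT
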